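/- Let A be a set and let r be a binary relation on the free monoid A* such that |u| = |v| whenever u r v (a balanced presentation). Let M be the quotient of A* by the monoid congruence generated by r. Then M belongs to Tak(𝒮): every ascending chain of subsemigroups of M of bounded rank is stationary. -/

import Mathlib

/-- Auxiliary: in a monoid graded by a length function `f` (additive on products,
vanishing only at `1`), every ascending chain of subsemigroups of bounded rank
is stationary. -/
theorem stmt_9_aux {Q : Type*} [Monoid Q] (f : Q → ℕ)
    (hmul : ∀ x y : Q, f (x * y) = f x + f y) (hzero : ∀ x : Q, f x = 0 → x = 1)
    (M : ℕ) (T : ℕ → Subsemigroup Q) (hmono : Monotone T)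
    (hrk : ∀ n, ∃ B : Finset Q, B.card ≤ M ∧
      Subsemigroup.closure (B : Set Q) = T n) :
    ∃ p, ∀ n, p ≤ n → T n = T p := by
  classical
  -- membership in the union of the chain
  set P : Q → Prop := fun x => ∃ n, x ∈ T n with hP
  -- the set of irreducible (non-identity, non-decomposable) elements of the union
  set Irr : Set Q := {t | P t ∧ f t ≠ 0 ∧
      ¬ ∃ a b, P a ∧ P b ∧ f a ≠ 0 ∧ f b ≠ 0 ∧ t = a * b} with hIrr
  -- decomposition lemma inside a closure
  have hdecomp : ∀ (S : Set Q) (t : Q), t ∈ Subsemigroup.closure S →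
      f t = 0 ∨ (∃ a b, a ∈ Subsemigroup.closure S ∧ b ∈ Subsemigroup.closure S ∧
        f a ≠ 0 ∧ f b ≠ 0 ∧ t = a * b) ∨ t ∈ S := by
    intro S t ht
    induction ht using Subsemigroup.closure_induction with
    | mem x hx => exact Or.inr (Or.inr hx)
    | mul x y hxc hyc hx hy =>
      by_cases hfx : f x = 0
      · rw [hzero x hfx, one_mul]
        exact hy
      by_cases hfy : f y = 0
      · rw [hzero y hfy, mul_one]
        exact hx
      exact Or.inr (Or.inl ⟨x, y, hxc, hyc, hfx, hfy, rfl⟩)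
  -- every irreducible element lying in `T n` belongs to the generating set of `T n`
  have hirr_mem : ∀ n, ∀ B : Finset Q, Subsemigroup.closure (B : Set Q) = T n →
      ∀ t ∈ Irr, t ∈ T n → t ∈ B := by
    intro n B hB t ht htn
    rw [← hB] at htn
    rcases hdecomp (B : Set Q) t htn with h0 | ⟨a, b, ha, hb, hfa, hfb, rfl⟩ | hmem
    · exact absurd h0 ht.2.1
    · exact absurd ⟨a, b, ⟨n, hB ▸ ha⟩, ⟨n, hB ▸ hb⟩, hfa, hfb, rfl⟩ ht.2.2
    · exact hmem
  -- `Irr` is finite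
  have hgex : ∀ t : Q, ∃ n, t ∈ Irr → t ∈ T n := by
    intro t
    by_cases h : t ∈ Irr
    · exact ⟨h.1.choose, fun _ => h.1.choose_spec⟩
    · exact ⟨0, fun h' => absurd h' h⟩
  choose g hg using hgex
  have hfin : Irr.Finite := by
    by_contra hinf
    have hinf' : Irr.Infinite := hinf
    obtain ⟨F, hFsub, hFcard⟩ := hinf'.exists_subset_card_eq (M + 1)
    set N := F.sup g with hN
    have hFT : ∀ t ∈ F, t ∈ T N := fun t ht =>
      hmono (Finset.le_sup ht) (hg t (hFsub ht))
    obtain ⟨B, hBcard, hB⟩ := hrk N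
    have hFB : F ⊆ B := fun t ht =>
      hirr_mem N B hB t (hFsub ht) (hFT t ht)
    have := Finset.card_le_card hFB
    omega
  -- choose a level containing `Irr`
  set p1 := hfin.toFinset.sup g with hp1
  have hIrrT : ∀ t ∈ Irr, t ∈ T p1 := fun t ht =>
    hmono (Finset.le_sup (hfin.mem_toFinset.mpr ht)) (hg t ht)
  -- choose a level containing `1` if it ever appears
  set p2 : ℕ := if h : ∃ n, (1 : Q) ∈ T n then h.choose else 0 with hp2
  have hone : (∃ n, (1 : Q) ∈ T n) → (1 : Q) ∈ T p2 := by
    intro h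
    rw [hp2, dif_pos h]
    exact h.choose_spec
  set p := max p1 p2 with hp
  -- main claim: every element of the union lies in `T p`
  have main : ∀ k t, f t < k → P t → t ∈ T p := by
    intro k
    induction k with
    | zero => intro t h; omega
    | succ m ih =>
      intro t hft hPt
      by_cases h0 : f t = 0
      · have : t = 1 := hzero t h0
        subst this
        exact hmono (le_max_right p1 p2) (hone hPt)
      by_cases hirr : t ∈ Irr
      · exact hmono (le_max_left p1 p2) (hIrrT t hirr)
      · have : ∃ a b, P a ∧ P b ∧ f a ≠ 0 ∧ f b ≠ 0 ∧ t = a * b := by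
          by_contra hcon
          exact hirr ⟨hPt, h0, hcon⟩
        obtain ⟨a, b, hPa, hPb, hfa, hfb, rfl⟩ := this
        have hsum : f (a * b) = f a + f b := hmul a b
        have ha : a ∈ T p := ih a (by omega) hPa
        have hb : b ∈ T p := ih b (by omega) hPb
        exact mul_mem ha hb
  refine ⟨p, fun n hn => le_antisymm ?_ (hmono hn)⟩
  intro t ht
  exact main (f t + 1) t (by omega) ⟨n, ht⟩

/-- a monoid defined by a balanced presentation belongs to
Tak(𝒮): if `r` is a relation on the free monoid `A*` with `|u| = |v|` whenever
`r u v`, and `M` is the quotient of `A*` by the congruence generated by `r`,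
then every ascending chain of subsemigroups of `M` of bounded rank is
stationary. -/
theorem stmt_9 (A : Type*) (r : FreeMonoid A → FreeMonoid A → Prop)
    (hbal : ∀ u v, r u v → u.length = v.length)
    (M : ℕ) (T : ℕ → Subsemigroup (conGen r).Quotient) (hmono : Monotone T)
    (hrk : ∀ n, ∃ B : Finset (conGen r).Quotient, B.card ≤ M ∧
      Subsemigroup.closure (B : Set (conGen r).Quotient) = T n) :
    ∃ p, ∀ n, p ≤ n → T n = T p := by
  -- the length homomorphism to `Multiplicative ℕ`
  let φ : FreeMonoid A →* Multiplicative ℕ :=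
    { toFun := fun w => Multiplicative.ofAdd w.length
      map_one' := by simp [FreeMonoid.length_one]
      map_mul' := fun x y => by
        simp [FreeMonoid.length_mul, ofAdd_add] }
  have hle : conGen r ≤ Con.ker φ := by
    refine Con.conGen_le.mpr ?_
    intro u v huv
    show φ u = φ v
    simp only [φ, MonoidHom.coe_mk, OneHom.coe_mk]
    exact congrArg Multiplicative.ofAdd (hbal u v huv)
  let F : (conGen r).Quotient →* Multiplicative ℕ := Con.lift _ φ hle
  refine stmt_9_aux (fun x => Multiplicative.toAdd (F x)) ?_ ?_ M T hmono hrk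
  · intro x y
    simp [map_mul]
  · intro x hx
    induction x using Con.induction_on with
    | H w =>
      have hw : w.length = 0 := by
        exact hx
      simp [FreeMonoid.length_eq_zero.mp hw]
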